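/- Let L, ρ > 0 and let κ : ℝ → ℝ be continuous and L-periodic with sup |κ| = M₀. Let ũ and ũ_j (j ∈ ℕ) be C¹ functions from ℝ × [0,ρ] to ℝ, L-periodic in s, such that |ũ|, |∂_sũ|, |∂_xũ| and |ũ_j|, |∂_sũ_j|, |∂_xũ_j| are all bounded by a constant M, and assume M₀ M ρ² ≤ 1/2. Set u(s,x) = x² ũ(s,x) and u_j(s,x) = x² ũ_j(s,x). If sup over ℝ × [0,ρ] of ( |ũ_j − ũ| + |∂_s ũ_j − ∂_s ũ| + |∂_x ũ_j − ∂_x ũ| ) tends to 0 as j → ∞, and ε_j → 0⁺, then ∫_{ε_j}^ρ ∫₀^L ( J_{u_j}(s,x) − J_u(s,x) ) x^{−2} ds dx → 0 as j → ∞. -/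

import Mathlib

set_option maxHeartbeats 1000000


noncomputable section

/-- Partial derivative in the first variable `s`. -/
def pS (u : ℝ × ℝ → ℝ) (p : ℝ × ℝ) : ℝ := deriv (fun t => u (t, p.2)) p.1

/-- Partial derivative in the second variable `x`. -/
def pX (u : ℝ × ℝ → ℝ) (p : ℝ × ℝ) : ℝ := deriv (fun t => u (p.1, t)) p.2

/-- The Jacobian `J_f(s,x) = sqrt((∂_s f)² + (1 − κ(s) f)² (1 + (∂_x f)²))` of the
horizontal graph of `f` over the vertical cylinder on a unit-speed plane curve of
curvature `κ`. -/
def Jgraph (κ : ℝ → ℝ) (f : ℝ × ℝ → ℝ) (p : ℝ × ℝ) : ℝ :=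
  Real.sqrt ((pS f p) ^ 2 + (1 - κ p.1 * f p) ^ 2 * (1 + (pX f p) ^ 2))

/-- If `u_j = x²ũ_j` converges to `u = x²ũ` in the sense that `ũ_j → ũ` in `C¹`
uniformly on the band `ℝ × [0,ρ]`, with uniform `C¹` bound `M`, `sup|κ| = M₀`, and
`M₀ M ρ² ≤ 1/2`, then the truncated hyperbolic areas converge:
`∫_{ε_j}^ρ ∫₀^L (J_{u_j} − J_u) x^{−2} ds dx → 0` whenever `ε_j → 0⁺`. -/
lemma pS_smul {g : ℝ × ℝ → ℝ} (hg : ContDiff ℝ 1 g) (s x : ℝ) :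
    pS (fun p => p.2^2 * g p) (s, x) = x^2 * pS g (s, x) := by
  have hdg : DifferentiableAt ℝ (fun t => g (t, x)) s :=
    ((hg.differentiable one_ne_zero) (s, x)).comp s
      (differentiableAt_id.prodMk (differentiableAt_const x))
  unfold pS
  simp only
  exact deriv_const_mul (x^2) hdg

lemma pX_smul {g : ℝ × ℝ → ℝ} (hg : ContDiff ℝ 1 g) (s x : ℝ) :
    pX (fun p => p.2^2 * g p) (s, x) = 2*x*g (s, x) + x^2 * pX g (s, x) := by
  have hdg : DifferentiableAt ℝ (fun t => g (s, t)) x :=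
    ((hg.differentiable one_ne_zero) (s, x)).comp x
      ((differentiableAt_const s).prodMk differentiableAt_id)
  have hdp : DifferentiableAt ℝ (fun t : ℝ => t^2) x := differentiableAt_pow 2
  unfold pX
  simp only
  rw [deriv_fun_mul hdp hdg]
  simp [mul_comm]

lemma Jgraph_smul {g : ℝ × ℝ → ℝ} (hg : ContDiff ℝ 1 g) (κ : ℝ → ℝ) (s x : ℝ) :
    Jgraph κ (fun p => p.2^2 * g p) (s, x) =
      Real.sqrt ((x^2*(pS g (s,x)))^2
        + (1 - κ s*(x^2*(g (s,x))))^2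
          * (1 + (2*x*(g (s,x)) + x^2*(pX g (s,x)))^2)) := by
  unfold Jgraph
  rw [pS_smul hg, pX_smul hg]

lemma sqrt_lip {a b : ℝ} (ha : 1/4 ≤ a) (hb : 1/4 ≤ b) :
    |Real.sqrt a - Real.sqrt b| ≤ |a - b| := by
  have ha0 : (0:ℝ) ≤ a := by linarith
  have hb0 : (0:ℝ) ≤ b := by linarith
  have hpa : Real.sqrt a ^ 2 = a := Real.sq_sqrt ha0
  have hpb : Real.sqrt b ^ 2 = b := Real.sq_sqrt hb0
  have hpa2 : (1:ℝ)/2 ≤ Real.sqrt a := by nlinarith [Real.sqrt_nonneg a]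
  have hpb2 : (1:ℝ)/2 ≤ Real.sqrt b := by nlinarith [Real.sqrt_nonneg b]
  rcases le_total (Real.sqrt b) (Real.sqrt a) with h | h
  · have h2 : b ≤ a := by nlinarith
    rw [abs_of_nonneg (by linarith), abs_of_nonneg (by linarith)]
    nlinarith
  · have h2 : a ≤ b := by nlinarith
    rw [abs_of_nonpos (by linarith), abs_of_nonpos (by linarith)]
    nlinarith

lemma sq_diff_abs {u v B d : ℝ} (hu : |u| ≤ B) (hv : |v| ≤ B) (hd : |u - v| ≤ d) :
    |u^2 - v^2| ≤ 2*B*d := by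
  have hB : 0 ≤ B := (abs_nonneg u).trans hu
  have h : u^2 - v^2 = (u+v)*(u-v) := by ring
  rw [h, abs_mul]
  have h2 : |u+v| ≤ 2*B := (abs_add_le u v).trans (by linarith)
  exact mul_le_mul h2 hd (abs_nonneg _) (by linarith)

lemma quarter_le {R P Q : ℝ} (h1 : -(1/2) ≤ R) (h2 : R ≤ 1/2) :
    1/4 ≤ P^2 + (1 - R)^2 * (1 + Q^2) := by
  have h3 : (1/4:ℝ) ≤ (1 - R)^2 := by nlinarith
  have h4 : (1:ℝ) ≤ 1 + Q^2 := by nlinarith [sq_nonneg Q]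
  have h5 : (1/4:ℝ)*1 ≤ (1 - R)^2 * (1 + Q^2) :=
    mul_le_mul h3 h4 (by norm_num) (by positivity)
  nlinarith [sq_nonneg P]

lemma two_bd {x ρ K y z : ℝ} (hx : 0 < x) (hxρ : x ≤ ρ)
    (hy : |y| ≤ K) (hz : |z| ≤ K) : |2*x*y + x^2*z| ≤ (2+ρ)*K*x := by
  have hK : 0 ≤ K := (abs_nonneg y).trans hy
  have e1 : |2*x*y| = 2*x*|y| := by
    rw [abs_mul, abs_of_pos (by positivity : (0:ℝ) < 2*x)]
  have e2 : |x^2*z| = x^2*|z| := by rw [abs_mul, abs_of_nonneg (sq_nonneg x)]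
  have hxx : x^2 ≤ ρ*x := by nlinarith
  have h3 := mul_le_mul_of_nonneg_left hxx hK
  calc |2*x*y + x^2*z| ≤ |2*x*y| + |x^2*z| := abs_add_le _ _
    _ = 2*x*|y| + x^2*|z| := by rw [e1, e2]
    _ ≤ 2*x*K + x^2*K := by
        have h1 := mul_le_mul_of_nonneg_left hy (by positivity : (0:ℝ) ≤ 2*x)
        have h2 := mul_le_mul_of_nonneg_left hz (sq_nonneg x)
        linarith
    _ ≤ (2+ρ)*K*x := by nlinarith

lemma one_plus_sq_le {y B C : ℝ} (h : y^2 ≤ B) (hBC : B ≤ C) :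
    1 + y^2 ≤ 1 + C := by linarith

lemma assemble_le {M₀ M ρ η x : ℝ} (hM₀ : 0 ≤ M₀) (hM : 0 ≤ M) (hη : 0 ≤ η)
    (hx : 0 < x) (hxρ : x ≤ ρ) :
    2*(M*x^2)*(η*x^2) + (2*(3/2)*(M₀*η*x^2)) * (1 + (2+ρ)^2*M^2*ρ^2)
      + (9/4) * (2*((2+ρ)*M*x)*((2+ρ)*η*x))
    ≤ (2*M*ρ^2 + 3*M₀*(1+ρ^2*(2+ρ)^2*M^2) + (9/2)*(2+ρ)^2*M) * η * x^2 := by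
  have hx2 : x^2 ≤ ρ^2 := pow_le_pow_left₀ hx.le hxρ 2
  have hnn : (0:ℝ) ≤ 2*M*η*x^2 := by positivity
  have h5 := mul_le_mul_of_nonneg_left hx2 hnn
  nlinarith [h5]

lemma key_bound (M₀ M ρ x η κs a b c a' b' c' : ℝ)
    (hM₀ : 0 ≤ M₀) (hM : 0 ≤ M)
    (hκ : |κs| ≤ M₀)
    (ha : |a| ≤ M) (hb : |b| ≤ M) (hc : |c| ≤ M)
    (ha' : |a'| ≤ M) (hb' : |b'| ≤ M) (hc' : |c'| ≤ M)
    (da : |a' - a| ≤ η) (db : |b' - b| ≤ η) (dc : |c' - c| ≤ η)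
    (hx : 0 < x) (hxρ : x ≤ ρ) (hsmall : M₀ * M * ρ ^ 2 ≤ 1 / 2) :
    |Real.sqrt ((x^2*a')^2 + (1 - κs*(x^2*c'))^2 * (1 + (2*x*c' + x^2*b')^2))
      - Real.sqrt ((x^2*a)^2 + (1 - κs*(x^2*c))^2 * (1 + (2*x*c + x^2*b)^2))|
      ≤ (2*M*ρ^2 + 3*M₀*(1+ρ^2*(2+ρ)^2*M^2) + (9/2)*(2+ρ)^2*M) * η * x^2 := by
  have hη : 0 ≤ η := (abs_nonneg _).trans da
  have hρ0 : 0 < ρ := lt_of_lt_of_le hx hxρ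
  have hx2 : x^2 ≤ ρ^2 := pow_le_pow_left₀ hx.le hxρ 2
  have hRbd : ∀ z : ℝ, |z| ≤ M → |κs*(x^2*z)| ≤ 1/2 := by
    intro z hz
    have h1 : |κs*(x^2*z)| = |κs| * (x^2 * |z|) := by
      rw [abs_mul, abs_mul, abs_of_nonneg (sq_nonneg x)]
    rw [h1]
    have h2 : |κs| * (x^2 * |z|) ≤ M₀ * (ρ^2 * M) := by
      apply mul_le_mul hκ _ (by positivity) hM₀
      exact mul_le_mul hx2 hz (abs_nonneg z) (by positivity)
    have h3 : M₀ * (ρ^2 * M) = M₀ * M * ρ^2 := by ring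
    linarith
  obtain ⟨hRl, hRu⟩ := abs_le.mp (hRbd c hc)
  obtain ⟨hRl', hRu'⟩ := abs_le.mp (hRbd c' hc')
  have hA : 1/4 ≤ (x^2*a)^2 + (1 - κs*(x^2*c))^2 * (1 + (2*x*c + x^2*b)^2) :=
    quarter_le hRl hRu
  have hA' : 1/4 ≤ (x^2*a')^2 + (1 - κs*(x^2*c'))^2 * (1 + (2*x*c' + x^2*b')^2) :=
    quarter_le hRl' hRu'
  refine (sqrt_lip hA' hA).trans ?_
  have hPbd : ∀ z : ℝ, |z| ≤ M → |x^2*z| ≤ M*x^2 := by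
    intro z hz
    rw [abs_mul, abs_of_nonneg (sq_nonneg x), mul_comm]
    exact mul_le_mul_of_nonneg_right hz (sq_nonneg x)
  have hdP : |x^2*a' - x^2*a| ≤ η*x^2 := by
    have h : x^2*a' - x^2*a = x^2*(a'-a) := by ring
    rw [h, abs_mul, abs_of_nonneg (sq_nonneg x), mul_comm]
    exact mul_le_mul_of_nonneg_right da (sq_nonneg x)
  have T1 : |(x^2*a')^2 - (x^2*a)^2| ≤ 2*(M*x^2)*(η*x^2) :=
    sq_diff_abs (hPbd a' ha') (hPbd a ha) hdP
  have hRd : |(1 - κs*(x^2*c')) - (1 - κs*(x^2*c))| ≤ M₀*η*x^2 := by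
    have h1 : (1 - κs*(x^2*c')) - (1 - κs*(x^2*c)) = κs*(x^2*(c - c')) := by ring
    rw [h1, abs_mul, abs_mul, abs_of_nonneg (sq_nonneg x)]
    have hcc : |c - c'| ≤ η := by rw [abs_sub_comm]; exact dc
    calc |κs| * (x^2 * |c - c'|) ≤ M₀ * (x^2 * η) := by
          apply mul_le_mul hκ _ (by positivity) hM₀
          exact mul_le_mul_of_nonneg_left hcc (sq_nonneg x)
      _ = M₀*η*x^2 := by ring
  have hRb : |1 - κs*(x^2*c)| ≤ 3/2 := by rw [abs_le]; constructor <;> linarith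
  have hRb' : |1 - κs*(x^2*c')| ≤ 3/2 := by rw [abs_le]; constructor <;> linarith
  have T2 : |(1 - κs*(x^2*c'))^2 - (1 - κs*(x^2*c))^2| ≤ 2*(3/2)*(M₀*η*x^2) :=
    sq_diff_abs hRb' hRb hRd
  have hQ' : |2*x*c' + x^2*b'| ≤ (2+ρ)*M*x := two_bd hx hxρ hc' hb'
  have hQ : |2*x*c + x^2*b| ≤ (2+ρ)*M*x := two_bd hx hxρ hc hb
  have hdQ : |(2*x*c' + x^2*b') - (2*x*c + x^2*b)| ≤ (2+ρ)*η*x := by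
    have h1 : (2*x*c' + x^2*b') - (2*x*c + x^2*b) = 2*x*(c'-c) + x^2*(b'-b) := by ring
    rw [h1]
    exact two_bd hx hxρ dc db
  have T3 : |(2*x*c' + x^2*b')^2 - (2*x*c + x^2*b)^2| ≤ 2*((2+ρ)*M*x)*((2+ρ)*η*x) :=
    sq_diff_abs hQ' hQ hdQ
  have hQ'sq : (2*x*c' + x^2*b')^2 ≤ ((2+ρ)*M*x)^2 := by
    obtain ⟨h1, h2⟩ := abs_le.mp hQ'
    exact sq_le_sq' h1 h2
  have hBC : ((2+ρ)*M*x)^2 ≤ (2+ρ)^2*M^2*ρ^2 := by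
    have h4 := mul_le_mul_of_nonneg_left hx2 (sq_nonneg ((2+ρ)*M))
    calc ((2+ρ)*M*x)^2 = ((2+ρ)*M)^2 * x^2 := by ring
      _ ≤ ((2+ρ)*M)^2 * ρ^2 := h4
      _ = (2+ρ)^2*M^2*ρ^2 := by ring
  have hQ'sq2 : 1 + (2*x*c' + x^2*b')^2 ≤ 1 + (2+ρ)^2*M^2*ρ^2 :=
    one_plus_sq_le hQ'sq hBC
  have hRsq : (1 - κs*(x^2*c))^2 ≤ 9/4 := by
    obtain ⟨h1, h2⟩ := abs_le.mp hRb
    nlinarith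
  have K2 : |((1 - κs*(x^2*c'))^2 - (1 - κs*(x^2*c))^2) * (1 + (2*x*c' + x^2*b')^2)|
      ≤ (2*(3/2)*(M₀*η*x^2)) * (1 + (2+ρ)^2*M^2*ρ^2) := by
    rw [abs_mul]
    apply mul_le_mul T2 _ (abs_nonneg _) (by positivity)
    rw [abs_of_nonneg (by positivity)]
    exact hQ'sq2
  have K3 : |(1 - κs*(x^2*c))^2 * ((2*x*c' + x^2*b')^2 - (2*x*c + x^2*b)^2)|
      ≤ (9/4) * (2*((2+ρ)*M*x)*((2+ρ)*η*x)) := by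
    rw [abs_mul, abs_of_nonneg (sq_nonneg _)]
    exact mul_le_mul hRsq T3 (abs_nonneg _) (by norm_num)
  have hsplit : ((x^2*a')^2 + (1 - κs*(x^2*c'))^2 * (1 + (2*x*c' + x^2*b')^2))
      - ((x^2*a)^2 + (1 - κs*(x^2*c))^2 * (1 + (2*x*c + x^2*b)^2))
      = ((x^2*a')^2 - (x^2*a)^2)
      + ((1 - κs*(x^2*c'))^2 - (1 - κs*(x^2*c))^2) * (1 + (2*x*c' + x^2*b')^2)
      + (1 - κs*(x^2*c))^2 * ((2*x*c' + x^2*b')^2 - (2*x*c + x^2*b)^2) := by ring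
  calc |((x^2*a')^2 + (1 - κs*(x^2*c'))^2 * (1 + (2*x*c' + x^2*b')^2))
      - ((x^2*a)^2 + (1 - κs*(x^2*c))^2 * (1 + (2*x*c + x^2*b)^2))|
      ≤ |(x^2*a')^2 - (x^2*a)^2|
        + |((1 - κs*(x^2*c'))^2 - (1 - κs*(x^2*c))^2) * (1 + (2*x*c' + x^2*b')^2)|
        + |(1 - κs*(x^2*c))^2 * ((2*x*c' + x^2*b')^2 - (2*x*c + x^2*b)^2)| := by
        rw [hsplit]
        exact (abs_add_le _ _).trans (by gcongr; exact abs_add_le _ _)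
    _ ≤ (2*(M*x^2)*(η*x^2)) + ((2*(3/2)*(M₀*η*x^2)) * (1 + (2+ρ)^2*M^2*ρ^2))
        + ((9/4) * (2*((2+ρ)*M*x)*((2+ρ)*η*x))) := by linarith
    _ ≤ (2*M*ρ^2 + 3*M₀*(1+ρ^2*(2+ρ)^2*M^2) + (9/2)*(2+ρ)^2*M) * η * x^2 :=
      assemble_le hM₀ hM hη hx hxρ

theorem band_area_difference_tendsto_zero
    (L ρ M₀ M : ℝ) (hL : 0 < L) (hρ : 0 < ρ)
    (κ : ℝ → ℝ) (hκc : Continuous κ) (hκp : Function.Periodic κ L)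
    (hM₀ : IsLUB (Set.range fun s => |κ s|) M₀)
    (ut : ℝ × ℝ → ℝ) (utj : ℕ → ℝ × ℝ → ℝ)
    (hut : ContDiff ℝ 1 ut) (hutj : ∀ j, ContDiff ℝ 1 (utj j))
    (hper : ∀ s x : ℝ, ut (s + L, x) = ut (s, x))
    (hperj : ∀ j, ∀ s x : ℝ, utj j (s + L, x) = utj j (s, x))
    (hbd : ∀ s : ℝ, ∀ x ∈ Set.Icc (0 : ℝ) ρ,
      |ut (s, x)| ≤ M ∧ |pS ut (s, x)| ≤ M ∧ |pX ut (s, x)| ≤ M)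
    (hbdj : ∀ j, ∀ s : ℝ, ∀ x ∈ Set.Icc (0 : ℝ) ρ,
      |utj j (s, x)| ≤ M ∧ |pS (utj j) (s, x)| ≤ M ∧ |pX (utj j) (s, x)| ≤ M)
    (hsmall : M₀ * M * ρ ^ 2 ≤ 1 / 2)
    (hconv : ∀ η > (0 : ℝ), ∃ N : ℕ, ∀ j ≥ N, ∀ s : ℝ, ∀ x ∈ Set.Icc (0 : ℝ) ρ,
      |utj j (s, x) - ut (s, x)| + |pS (utj j) (s, x) - pS ut (s, x)|
        + |pX (utj j) (s, x) - pX ut (s, x)| ≤ η)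
    (ε : ℕ → ℝ) (hεpos : ∀ j, 0 < ε j)
    (hε0 : Filter.Tendsto ε Filter.atTop (nhds 0)) :
    Filter.Tendsto
      (fun j : ℕ =>
        ∫ x in (ε j)..ρ, (∫ s in (0 : ℝ)..L,
          (Jgraph κ (fun p => p.2 ^ 2 * utj j p) (s, x)
            - Jgraph κ (fun p => p.2 ^ 2 * ut p) (s, x))) / x ^ 2)
      Filter.atTop (nhds 0) := by
  have hM : 0 ≤ M := (abs_nonneg _).trans ((hbd 0 0 ⟨le_refl 0, hρ.le⟩).1)
  have hM₀n : 0 ≤ M₀ := (abs_nonneg (κ 0)).trans (hM₀.1 ⟨0, rfl⟩)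
  set C := 2*M*ρ^2 + 3*M₀*(1+ρ^2*(2+ρ)^2*M^2) + (9/2)*(2+ρ)^2*M with hCdef
  have hC : 0 ≤ C := by
    have h1 : (0:ℝ) ≤ 2*M*ρ^2 := mul_nonneg (mul_nonneg (by norm_num) hM) (sq_nonneg ρ)
    have h2 : (0:ℝ) ≤ 3*M₀*(1+ρ^2*(2+ρ)^2*M^2) :=
      mul_nonneg (mul_nonneg (by norm_num) hM₀n) (by positivity)
    have h3 : (0:ℝ) ≤ (9/2)*(2+ρ)^2*M :=
      mul_nonneg (mul_nonneg (by norm_num) (sq_nonneg _)) hM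
    rw [hCdef]; linarith
  rw [Metric.tendsto_atTop]
  intro δ hδ
  have hden : (0:ℝ) < C*L*ρ + 1 := by
    have := mul_nonneg (mul_nonneg hC hL.le) hρ.le
    linarith
  set η := δ / (2*(C*L*ρ+1)) with hηdef
  have hηpos : 0 < η := div_pos hδ (by linarith)
  have hδeq : η * (2*(C*L*ρ+1)) = δ := div_mul_cancel₀ δ (by positivity)
  obtain ⟨N₁, hN₁⟩ := hconv η hηpos
  obtain ⟨N₂, hN₂⟩ := Filter.eventually_atTop.mp (hε0.eventually_lt_const hρ)
  refine ⟨max N₁ N₂, fun j hj => ?_⟩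
  have hjN₁ : N₁ ≤ j := le_trans (le_max_left _ _) hj
  have hjN₂ : N₂ ≤ j := le_trans (le_max_right _ _) hj
  have hεj : 0 < ε j := hεpos j
  have hεjρ : ε j < ρ := hN₂ j hjN₂
  rw [dist_zero_right, Real.norm_eq_abs]
  -- pointwise bound
  have hpt : ∀ x ∈ Set.Ioc (ε j) ρ, ∀ s : ℝ,
      |Jgraph κ (fun p => p.2 ^ 2 * utj j p) (s, x)
        - Jgraph κ (fun p => p.2 ^ 2 * ut p) (s, x)| ≤ C * η * x^2 := by
    intro x hx s
    have hx0 : 0 < x := lt_trans hεj hx.1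
    have hxIcc : x ∈ Set.Icc (0:ℝ) ρ := ⟨hx0.le, hx.2⟩
    obtain ⟨hb1, hb2, hb3⟩ := hbd s x hxIcc
    obtain ⟨hb1', hb2', hb3'⟩ := hbdj j s x hxIcc
    have hcl := hN₁ j hjN₁ s x hxIcc
    have n1 := abs_nonneg (utj j (s, x) - ut (s, x))
    have n2 := abs_nonneg (pS (utj j) (s, x) - pS ut (s, x))
    have n3 := abs_nonneg (pX (utj j) (s, x) - pX ut (s, x))
    have d1 : |utj j (s,x) - ut (s,x)| ≤ η := by linarith
    have d2 : |pS (utj j) (s,x) - pS ut (s,x)| ≤ η := by linarith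
    have d3 : |pX (utj j) (s,x) - pX ut (s,x)| ≤ η := by linarith
    have hκs : |κ s| ≤ M₀ := hM₀.1 ⟨s, rfl⟩
    rw [Jgraph_smul (hutj j) κ s x, Jgraph_smul hut κ s x]
    exact key_bound M₀ M ρ x η (κ s) (pS ut (s,x)) (pX ut (s,x)) (ut (s,x))
      (pS (utj j) (s,x)) (pX (utj j) (s,x)) (utj j (s,x))
      hM₀n hM hκs hb2 hb3 hb1 hb2' hb3' hb1' d2 d3 d1 hx0 hx.2 hsmall
  -- inner integral bound
  have hinner : ∀ x ∈ Set.Ioc (ε j) ρ,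
      |(∫ s in (0:ℝ)..L,
          (Jgraph κ (fun p => p.2 ^ 2 * utj j p) (s, x)
            - Jgraph κ (fun p => p.2 ^ 2 * ut p) (s, x))) / x ^ 2| ≤ C * η * L := by
    intro x hx
    have hx0 : 0 < x := lt_trans hεj hx.1
    have h1 : ‖∫ s in (0:ℝ)..L,
        (Jgraph κ (fun p => p.2 ^ 2 * utj j p) (s, x)
          - Jgraph κ (fun p => p.2 ^ 2 * ut p) (s, x))‖ ≤ (C*η*x^2) * |L - 0| := by
      apply intervalIntegral.norm_integral_le_of_norm_le_const
      intro s hs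
      rw [Real.norm_eq_abs]
      exact hpt x hx s
    rw [Real.norm_eq_abs] at h1
    rw [abs_div, abs_of_nonneg (sq_nonneg x)]
    rw [div_le_iff₀ (by positivity : (0:ℝ) < x^2)]
    calc |∫ s in (0:ℝ)..L,
          (Jgraph κ (fun p => p.2 ^ 2 * utj j p) (s, x)
            - Jgraph κ (fun p => p.2 ^ 2 * ut p) (s, x))| ≤ (C*η*x^2) * |L - 0| := h1
      _ = C * η * L * x^2 := by rw [abs_of_nonneg (by linarith : (0:ℝ) ≤ L - 0)]; ring
  have houter : |∫ x in (ε j)..ρ, (∫ s in (0:ℝ)..L,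
      (Jgraph κ (fun p => p.2 ^ 2 * utj j p) (s, x)
        - Jgraph κ (fun p => p.2 ^ 2 * ut p) (s, x))) / x ^ 2|
      ≤ (C*η*L) * |ρ - ε j| := by
    rw [← Real.norm_eq_abs (∫ x in (ε j)..ρ, _)]
    apply intervalIntegral.norm_integral_le_of_norm_le_const
    intro x hx
    rw [Set.uIoc_of_le hεjρ.le] at hx
    rw [Real.norm_eq_abs]
    exact hinner x hx
  have hCnL : 0 ≤ C*η*L := mul_nonneg (mul_nonneg hC hηpos.le) hL.le
  have hfin : (C*η*L) * |ρ - ε j| ≤ C*η*L*ρ := by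
    have : |ρ - ε j| ≤ ρ := by rw [abs_of_nonneg (by linarith)]; linarith
    exact mul_le_mul_of_nonneg_left this hCnL
  have hlast : C*η*L*ρ < δ := by
    have h0 : 0 ≤ η*C*L*ρ :=
      mul_nonneg (mul_nonneg (mul_nonneg hηpos.le hC) hL.le) hρ.le
    nlinarith [hδeq]
  calc |∫ x in (ε j)..ρ, (∫ s in (0:ℝ)..L,
      (Jgraph κ (fun p => p.2 ^ 2 * utj j p) (s, x)
        - Jgraph κ (fun p => p.2 ^ 2 * ut p) (s, x))) / x ^ 2|
      ≤ (C*η*L) * |ρ - ε j| := houter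
    _ ≤ C*η*L*ρ := hfin
    _ < δ := hlast
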